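/- Suppose F and F' are finite subsets of [n] with heights h(F) < h(F') (with respect to parameters t, w), and let G, G' be (k−j)-subsets obtained from F, F' respectively by deleting j elements not belonging to the tails T(F) = F \ [t+2h(F)], T(F') = F' \ [t+2h(F')]. Then G ≠ G'; in particular the restricted j-th shadows ∂_R^j F and ∂_R^j F' are disjoint. -/

import Mathlib

open Finset

theorem restricted_shadows_disjoint (n k t w j : ℕ) (F F' G G' : Finset ℕ)
    (hF hF' : ℕ)
    (hj0 : 0 < j) (hjt : j ≤ t)
    (hFsub : F ⊆ Finset.Icc 1 n) (hF'sub : F' ⊆ Finset.Icc 1 n)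
    (hFcard : F.card = k) (hF'card : F'.card = k)
    (hFle : hF ≤ w)
    (hFsat : t + hF ≤ (F ∩ Finset.Icc 1 (t + 2 * hF)).card)
    (hFmax : ∀ h ≤ w, t + h ≤ (F ∩ Finset.Icc 1 (t + 2 * h)).card → h ≤ hF)
    (hF'le : hF' ≤ w)
    (hF'sat : t + hF' ≤ (F' ∩ Finset.Icc 1 (t + 2 * hF')).card)
    (hF'max : ∀ h ≤ w, t + h ≤ (F' ∩ Finset.Icc 1 (t + 2 * h)).card → h ≤ hF')
    (hlt : hF < hF')
    (hG : G ⊆ F) (hGcard : G.card = k - j)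
    (hGT : F \ Finset.Icc 1 (t + 2 * hF) ⊆ G)
    (hG' : G' ⊆ F') (hG'card : G'.card = k - j)
    (hG'T : F' \ Finset.Icc 1 (t + 2 * hF') ⊆ G') :
    G ≠ G' := by
  intro hGG'
  set A := Finset.Icc 1 (t + 2 * hF') with hA
  have hsubA : Finset.Icc 1 (t + 2 * hF) ⊆ A := Finset.Icc_subset_Icc le_rfl (by omega)
  have hkF : t + hF ≤ k := by
    calc t + hF ≤ (F ∩ Finset.Icc 1 (t + 2 * hF)).card := hFsat
      _ ≤ F.card := card_le_card inter_subset_left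
      _ = k := hFcard
  have hjk : j ≤ k := by omega
  have hFG : (F \ G).card = j := by rw [card_sdiff_of_subset hG, hFcard, hGcard]; omega
  have hF'G' : (F' \ G').card = j := by rw [card_sdiff_of_subset hG', hF'card, hG'card]; omega
  -- upper bound on |F ∩ A| by maximality of hF
  have hFA : (F ∩ A).card < t + hF' := by
    by_contra hcon
    push_neg at hcon
    exact absurd (hFmax hF' hF'le hcon) (by omega)
  -- removed elements of F lie in A
  have h1 : F \ G ⊆ A := by
    intro x hx
    rcases mem_sdiff.mp hx with ⟨hxF, hxG⟩
    by_contra hxn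
    exact hxG (hGT (mem_sdiff.mpr ⟨hxF, fun hm => hxn (hsubA hm)⟩))
  have h2 : (G ∩ A) ∪ (F \ G) ⊆ F ∩ A := by
    intro x hx
    rcases mem_union.mp hx with h | h
    · exact mem_inter.mpr ⟨hG (mem_inter.mp h).1, (mem_inter.mp h).2⟩
    · exact mem_inter.mpr ⟨(mem_sdiff.mp h).1, h1 h⟩
  have hdisj : Disjoint (G ∩ A) (F \ G) :=
    Finset.disjoint_left.mpr fun x hx hx' => (mem_sdiff.mp hx').2 (mem_inter.mp hx).1
  have hle : (G ∩ A).card + j ≤ (F ∩ A).card := by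
    rw [← hFG, ← card_union_of_disjoint hdisj]
    exact card_le_card h2
  -- lower bound for |G' ∩ A|
  have h3 : (F' ∩ A) \ (F' \ G') ⊆ G' ∩ A := by
    intro x hx
    simp only [mem_sdiff, mem_inter, not_and, not_not] at hx
    exact mem_inter.mpr ⟨hx.2 hx.1.1, hx.1.2⟩
  have hge : (F' ∩ A).card ≤ (G' ∩ A).card + j := by
    calc (F' ∩ A).card ≤ (((F' ∩ A) \ (F' \ G')) ∪ (F' \ G')).card := by
          refine card_le_card ?_
          intro x hx
          by_cases hxr : x ∈ F' \ G'
          · exact mem_union.mpr (Or.inr hxr)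
          · exact mem_union.mpr (Or.inl (mem_sdiff.mpr ⟨hx, hxr⟩))
      _ ≤ ((F' ∩ A) \ (F' \ G')).card + (F' \ G').card := card_union_le _ _
      _ ≤ (G' ∩ A).card + j := by rw [hF'G']; exact Nat.add_le_add_right (card_le_card h3) j
  have key : t + hF' ≤ (G' ∩ A).card + j := le_trans hF'sat hge
  rw [← hGG'] at key
  omega
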